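/- For any column vector ξ ∈ O², the octonionic Hermitian matrix ξ ⊗ ξ* = (conj(ξ_j) ξ_k)_{j,k} is nonnegative definite. -/

import Mathlib

noncomputable section

open Quaternion

/-- The octonions, as the Cayley–Dickson double of the quaternions. -/
@[ext] structure Octonion : Type where
  q1 : Quaternion ℝ
  q2 : Quaternion ℝ

namespace Octonion

def equivProd : Octonion ≃ Quaternion ℝ × Quaternion ℝ :=
  ⟨fun x => (x.q1, x.q2), fun p => ⟨p.1, p.2⟩, fun _ => rfl, fun _ => rfl⟩

instance : AddCommGroup Octonion := equivProd.addCommGroup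
instance : Module ℝ Octonion := equivProd.module ℝ
instance : TopologicalSpace Octonion :=
  TopologicalSpace.induced equivProd inferInstance

instance : One Octonion := ⟨⟨1, 0⟩⟩

/-- Cayley–Dickson multiplication: `(a,b)(c,d) = (ac - d̄b, da + b c̄)`. -/
instance : Mul Octonion :=
  ⟨fun x y => ⟨x.q1 * y.q1 - star y.q2 * x.q2, y.q2 * x.q1 + x.q2 * star y.q1⟩⟩

/-- Octonionic conjugation. -/
def conj (x : Octonion) : Octonion := ⟨star x.q1, -x.q2⟩

/-- The real part of an octonion. -/
def re (x : Octonion) : ℝ := x.q1.re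

/-- The imaginary part of an octonion. -/
def im (x : Octonion) : Octonion := (2⁻¹ : ℝ) • (x - conj x)

/-- The squared norm `|x|²` of an octonion. -/
def normSq (x : Octonion) : ℝ := Quaternion.normSq x.q1 + Quaternion.normSq x.q2

/-- The inverse of an octonion (junk value `0` at `0`). -/
def inv (x : Octonion) : Octonion := (normSq x)⁻¹ • conj x

end Octonion

namespace Octonion

/-- The Hermitian quadratic form `Re(ξ* A ξ)` of `A = [[a, x],[conj x, b]]` at `ξ = (ξ₁, ξ₂)`:
`a|ξ₁|² + b|ξ₂|² + 2 Re(conj(ξ₁) x ξ₂)`. -/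
def qform (a b : ℝ) (x : Octonion) (ξ₁ ξ₂ : Octonion) : ℝ :=
  a * normSq ξ₁ + b * normSq ξ₂ + 2 * re ((conj ξ₁ * x) * ξ₂)

/-- An octonionic Hermitian `2×2` matrix `[[d1, x],[conj x, d2]]`. -/
@[ext] structure Herm2 : Type where
  d1 : ℝ
  d2 : ℝ
  x : Octonion

namespace Herm2

instance : Add Herm2 := ⟨fun A B => ⟨A.d1 + B.d1, A.d2 + B.d2, A.x + B.x⟩⟩
instance : SMul ℝ Herm2 := ⟨fun r A => ⟨r * A.d1, r * A.d2, r • A.x⟩⟩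

/-- Nonnegative definiteness: `Re(ξ* A ξ) ≥ 0` for all `ξ ∈ O²`. -/
def PosSemidef (A : Herm2) : Prop := ∀ ξ₁ ξ₂ : Octonion, 0 ≤ qform A.d1 A.d2 A.x ξ₁ ξ₂

/-- Positive definiteness: `Re(ξ* A ξ) > 0` for all nonzero `ξ ∈ O²`. -/
def PosDef (A : Herm2) : Prop :=
  ∀ ξ₁ ξ₂ : Octonion, ¬(ξ₁ = 0 ∧ ξ₂ = 0) → 0 < qform A.d1 A.d2 A.x ξ₁ ξ₂

/-- The determinant `det A = ab - |x|²`. -/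
def det (A : Herm2) : ℝ := A.d1 * A.d2 - normSq A.x

/-- The mixed determinant `det(A,B) = (1/2)(a₁₁b₂₂ + a₂₂b₁₁ - 2 Re(a₁₂ b₂₁))`,
where `b₂₁ = conj(b₁₂)`. -/
def mixedDet (A B : Herm2) : ℝ :=
  (1 / 2) * (A.d1 * B.d2 + A.d2 * B.d1 - 2 * re (A.x * conj B.x))

end Herm2

end Octonion


namespace Octonion

lemma mul_q1' (x y : Octonion) : (x*y).q1 = x.q1*y.q1 - star y.q2 * x.q2 := rfl
lemma mul_q2' (x y : Octonion) : (x*y).q2 = y.q2 * x.q1 + x.q2 * star y.q1 := rfl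

set_option maxHeartbeats 2000000 in
lemma lemA' (x y : Octonion) : normSq (x*y) = normSq x * normSq y := by
  obtain ⟨a,b⟩ := x; obtain ⟨c,d⟩ := y
  simp only [Octonion.normSq, mul_q1', mul_q2', Quaternion.normSq_def', Quaternion.re_mul,
    Quaternion.imI_mul, Quaternion.imJ_mul, Quaternion.imK_mul,
    Quaternion.re_sub, Quaternion.imI_sub, Quaternion.imJ_sub, Quaternion.imK_sub,
    Quaternion.re_add, Quaternion.imI_add, Quaternion.imJ_add, Quaternion.imK_add,
    Quaternion.re_star, Quaternion.imI_star, Quaternion.imJ_star, Quaternion.imK_star]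
  ring

lemma normSq_conj' (x : Octonion) : normSq (conj x) = normSq x := by
  obtain ⟨a,b⟩ := x
  simp only [Octonion.normSq, Octonion.conj, Quaternion.normSq_def', Quaternion.re_star,
    Quaternion.imI_star, Quaternion.imJ_star, Quaternion.imK_star, Quaternion.re_neg,
    Quaternion.imI_neg, Quaternion.imJ_neg, Quaternion.imK_neg]
  ring

set_option maxHeartbeats 2000000 in
lemma lemT' (a b c : Octonion) : re ((a*b)*c) = re (b*(c*a)) := by
  obtain ⟨a1,a2⟩ := a; obtain ⟨b1,b2⟩ := b; obtain ⟨c1,c2⟩ := c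
  simp only [Octonion.re, mul_q1', mul_q2', Quaternion.re_mul, Quaternion.imI_mul,
    Quaternion.imJ_mul, Quaternion.imK_mul,
    Quaternion.re_sub, Quaternion.imI_sub, Quaternion.imJ_sub, Quaternion.imK_sub,
    Quaternion.re_add, Quaternion.imI_add, Quaternion.imJ_add, Quaternion.imK_add,
    Quaternion.re_star, Quaternion.imI_star, Quaternion.imJ_star, Quaternion.imK_star]
  ring

set_option maxHeartbeats 2000000 in
lemma scaled' (t : ℝ) (x y : Octonion) :
    0 ≤ t^2 * normSq x + normSq y + 2*t*re (x*y) := by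
  have h : t^2 * normSq x + normSq y + 2*t*re (x*y)
      = normSq ⟨t • star x.q1 + y.q1, y.q2 - t • x.q2⟩ := by
    obtain ⟨a,b⟩ := x; obtain ⟨c,d⟩ := y
    simp only [Octonion.normSq, Octonion.re, mul_q1', Quaternion.normSq_def',
      Quaternion.re_mul, Quaternion.re_sub, Quaternion.imI_sub, Quaternion.imJ_sub,
      Quaternion.imK_sub, Quaternion.re_add, Quaternion.imI_add, Quaternion.imJ_add,
      Quaternion.imK_add, Quaternion.re_smul, Quaternion.imI_smul, Quaternion.imJ_smul,
      Quaternion.imK_smul, Quaternion.re_star, Quaternion.imI_star, Quaternion.imJ_star,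
      Quaternion.imK_star, smul_eq_mul]
    ring
  rw [h]
  exact add_nonneg (Quaternion.normSq_nonneg) (Quaternion.normSq_nonneg)

end Octonion

open Octonion in
/-- For any `ξ ∈ O²` the matrix `ξ ⊗ ξ* = (conj(ξ_j) ξ_k)` is nonnegative
definite: `Re(η* (ξ⊗ξ*) η) ≥ 0` for all `η ∈ O²`. -/
theorem herm2_rankOne_nonneg (ξ₁ ξ₂ : Octonion) :
    ∀ η₁ η₂ : Octonion,
      0 ≤ normSq ξ₁ * normSq η₁ + normSq ξ₂ * normSq η₂ +
          2 * re ((conj η₁ * (conj ξ₁ * ξ₂)) * η₂) := by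
  intro η₁ η₂
  set x : Octonion := conj ξ₁ * ξ₂ with hx
  set y : Octonion := η₂ * conj η₁ with hy
  have hre : re ((conj η₁ * x) * η₂) = re (x * y) := Octonion.lemT' _ _ _
  rw [hre]
  have hnx : normSq x = normSq ξ₁ * normSq ξ₂ := by
    rw [hx, Octonion.lemA', Octonion.normSq_conj']
  have hny : normSq y = normSq η₁ * normSq η₂ := by
    rw [hy, Octonion.lemA', Octonion.normSq_conj', mul_comm]
  have hd : discrim (normSq x) (2 * re (x*y)) (normSq y) ≤ 0 := by
    apply discrim_le_zero
    intro t
    have := Octonion.scaled' t x y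
    nlinarith [this]
  rw [discrim, hnx, hny] at hd
  have hA : 0 ≤ normSq ξ₁ := add_nonneg Quaternion.normSq_nonneg Quaternion.normSq_nonneg
  have hB : 0 ≤ normSq ξ₂ := add_nonneg Quaternion.normSq_nonneg Quaternion.normSq_nonneg
  have hC : 0 ≤ normSq η₁ := add_nonneg Quaternion.normSq_nonneg Quaternion.normSq_nonneg
  have hD : 0 ≤ normSq η₂ := add_nonneg Quaternion.normSq_nonneg Quaternion.normSq_nonneg
  set S : ℝ := normSq ξ₁ * normSq η₁ + normSq ξ₂ * normSq η₂ with hS'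
  have hS : 0 ≤ S := add_nonneg (mul_nonneg hA hC) (mul_nonneg hB hD)
  have h2 : (2 * re (x*y))^2 ≤ S^2 := by
    nlinarith [hd, sq_nonneg (normSq ξ₁ * normSq η₁ - normSq ξ₂ * normSq η₂)]
  have h3 := abs_le_of_sq_le_sq' h2 hS
  linarith [h3.1]
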